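/- Let F ⊂ ℝ^d be a self-conformal set (the attractor of a conformal iterated function system on a bounded open convex set Ω ⊂ ℝ^d). If F satisfies the identity limit criterion, then F satisfies the weak separation condition. -/

import Mathlib

open MeasureTheory Set
open scoped ENNReal NNReal

noncomputable section

/-- The `s`-dimensional Hausdorff content: the infimum of `∑ diam(Uᵢ)^s` over all countable
covers of `A`. -/
def hContent {X : Type*} [PseudoEMetricSpace X] (s : ℝ) (A : Set X) : ℝ≥0∞ :=
  ⨅ (U : ℕ → Set X) (_ : A ⊆ ⋃ n, U n), ∑' n, EMetric.diam (U n) ^ s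

/-- The least number of closed balls of radius `r` (with arbitrary centers) needed to cover `A`. -/
def coverNum {X : Type*} [PseudoMetricSpace X] (A : Set X) (r : ℝ) : ℕ :=
  sInf {k : ℕ | ∃ t : Finset X, t.card = k ∧ A ⊆ ⋃ x ∈ t, Metric.closedBall x r}

/-- `A` is Ahlfors `s`-regular: there are a Radon measure `μ` supported on `A` and a constant
`C ≥ 1` with `C⁻¹ r^s ≤ μ(B(x,r)) ≤ C r^s` for all `x ∈ A` and `0 < r < diam A`. -/
def IsAhlforsRegular {X : Type*} [MetricSpace X] [MeasurableSpace X] (A : Set X) (s : ℝ) :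
    Prop :=
  ∃ (μ : Measure X) (C : ℝ), 1 ≤ C ∧ μ.Regular ∧ μ Aᶜ = 0 ∧
    ∀ x ∈ A, ∀ r : ℝ, 0 < r → r < Metric.diam A →
      ENNReal.ofReal (C⁻¹ * r ^ s) ≤ μ (Metric.closedBall x r) ∧
      μ (Metric.closedBall x r) ≤ ENNReal.ofReal (C * r ^ s)

/-- The Assouad dimension of a set `E`. -/
def assouadDim {X : Type*} [PseudoMetricSpace X] (E : Set X) : ℝ :=
  sInf {s : ℝ | 0 ≤ s ∧ ∃ C : ℝ, 1 ≤ C ∧ ∀ x ∈ E, ∀ r R : ℝ, 0 < r → r < R →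
    ∃ T : Set X, T ⊆ E ∧ T.Finite ∧ (T.ncard : ℝ) ≤ C * (R / r) ^ s ∧
      E ∩ Metric.closedBall x R ⊆ ⋃ y ∈ T, Metric.closedBall y r}

/-- A conformal iterated function system on a bounded open convex set `Ω`: `N ≥ 2` injective
conformal contractions `φ i : Ω → X` with `closure (φ i '' Ω) ⊆ Ω` and `‖φ i'‖ < 1`. -/
structure CIFS (X : Type*) [NormedAddCommGroup X] [NormedSpace ℝ X] (N : ℕ) (Ω : Set X) where
  two_le : 2 ≤ N
  isOpen : IsOpen Ω
  isBounded : Bornology.IsBounded Ω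
  convex : Convex ℝ Ω
  nonempty : Ω.Nonempty
  φ : Fin N → X → X
  injOn : ∀ i, Set.InjOn (φ i) Ω
  diffAt : ∀ i, ∀ x ∈ Ω, DifferentiableAt ℝ (φ i) x
  conformal : ∀ i, ∀ x ∈ Ω, ∀ v : X, ‖fderiv ℝ (φ i) x v‖ = ‖fderiv ℝ (φ i) x‖ * ‖v‖
  fderiv_ne : ∀ i, ∀ x ∈ Ω, fderiv ℝ (φ i) x ≠ 0
  holder : ∀ i, ∃ α c : ℝ, 0 < α ∧ 0 < c ∧ ∀ x ∈ Ω, ∀ y ∈ Ω,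
    ‖fderiv ℝ (φ i) x - fderiv ℝ (φ i) y‖ ≤ c * ‖x - y‖ ^ α
  mapsInto : ∀ i, closure (φ i '' Ω) ⊆ Ω
  contract : ∀ i, ∃ s : ℝ, s < 1 ∧ ∀ x ∈ Ω, ‖fderiv ℝ (φ i) x‖ ≤ s

namespace CIFS

variable {X : Type*} [NormedAddCommGroup X] [NormedSpace ℝ X] {N : ℕ} {Ω : Set X}

/-- The map `φ_𝚒 = φ_{i₁} ∘ ⋯ ∘ φ_{iₙ}` associated to a finite word `𝚒 = i₁⋯iₙ`
(the empty word gives the identity). -/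
def wmap (S : CIFS X N Ω) (w : List (Fin N)) : X → X :=
  w.foldr (fun i f => S.φ i ∘ f) id

/-- `‖φ_𝚒'‖ = sup_{x ∈ Ω} |φ_𝚒'(x)|`. -/
def dnorm (S : CIFS X N Ω) (w : List (Fin N)) : ℝ :=
  sSup {t : ℝ | ∃ x ∈ Ω, t = ‖fderiv ℝ (S.wmap w) x‖}

/-- `F` is the attractor (self-conformal set) of the system: the nonempty compact subset of `Ω`
with `F = ⋃ i, φ i '' F`. -/
def IsAttractor (S : CIFS X N Ω) (F : Set X) : Prop :=
  F.Nonempty ∧ IsCompact F ∧ F ⊆ Ω ∧ F = ⋃ i, S.φ i '' F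

/-- The family `Φ(x,r)` of restrictions `φ_𝚒|_F` over nonempty words `𝚒` with
`diam (φ_𝚒 F) ≤ r < diam (φ_{𝚒⁻} F)` and `φ_𝚒(F) ∩ B(x,r) ≠ ∅`. -/
def Phi (S : CIFS X N Ω) (F : Set X) (x : X) (r : ℝ) : Set (↥F → X) :=
  {g | ∃ w : List (Fin N), w ≠ [] ∧
    Metric.diam (S.wmap w '' F) ≤ r ∧
    r < Metric.diam (S.wmap w.dropLast '' F) ∧
    (S.wmap w '' F ∩ Metric.closedBall x r).Nonempty ∧
    g = F.restrict (S.wmap w)}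

/-- The weak separation condition: `sup {#Φ(x,r) : x ∈ F, r > 0} < ∞`. -/
def WSC (S : CIFS X N Ω) (F : Set X) : Prop :=
  ∃ M : ℕ, ∀ x ∈ F, ∀ r : ℝ, 0 < r → (S.Phi F x r).Finite ∧ (S.Phi F x r).ncard ≤ M

/-- `sup_{x ∈ F} |φ_𝚒(x) − φ_𝚓(x)|`. -/
def sep (S : CIFS X N Ω) (F : Set X) (w v : List (Fin N)) : ℝ :=
  ⨆ x : ↥F, dist (S.wmap w (x : X)) (S.wmap v (x : X))

/-- The identity limit criterion:
`inf { ‖φ_𝚒'‖⁻¹ ⬝ sup_{x∈F} |φ_𝚒(x) − φ_𝚓(x)| : φ_𝚒|_F ≠ φ_𝚓|_F } > 0`. -/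
def ILC (S : CIFS X N Ω) (F : Set X) : Prop :=
  ∃ ε : ℝ, 0 < ε ∧ ∀ w v : List (Fin N),
    F.restrict (S.wmap w) ≠ F.restrict (S.wmap v) →
    ε * S.dnorm w ≤ S.sep F w v

end CIFS

open Metric Set

lemma opNorm_comp_eq {E F G : Type*} [NormedAddCommGroup E] [NormedSpace ℝ E]
    [NormedAddCommGroup F] [NormedSpace ℝ F] [NormedAddCommGroup G] [NormedSpace ℝ G]
    (A : F →L[ℝ] G) (B : E →L[ℝ] F) (hA : ∀ v, ‖A v‖ = ‖A‖ * ‖v‖) :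
    ‖A.comp B‖ = ‖A‖ * ‖B‖ := by
  refine le_antisymm (ContinuousLinearMap.opNorm_comp_le A B) ?_
  rcases (norm_nonneg A).eq_or_lt with h0 | h0
  · rw [← h0, zero_mul]; exact norm_nonneg _
  · have hB : ‖B‖ ≤ ‖A.comp B‖ / ‖A‖ := by
      refine B.opNorm_le_bound (div_nonneg (norm_nonneg _) h0.le) fun v => ?_
      rw [div_mul_eq_mul_div, le_div_iff₀ h0, mul_comm _ ‖A‖, ← hA (B v)]
      exact (A.comp B).le_opNorm v
    calc ‖A‖ * ‖B‖ ≤ ‖A‖ * (‖A.comp B‖ / ‖A‖) :=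
          mul_le_mul_of_nonneg_left hB h0.le
      _ = ‖A.comp B‖ := by field_simp

namespace CIFS

variable {X : Type*} [NormedAddCommGroup X] [NormedSpace ℝ X] {N : ℕ} {Ω : Set X}
variable (S : CIFS X N Ω)

lemma wmap_nil : S.wmap [] = id := rfl

lemma wmap_cons (i : Fin N) (u : List (Fin N)) : S.wmap (i :: u) = S.φ i ∘ S.wmap u := rfl

lemma wmap_single (i : Fin N) : S.wmap [i] = S.φ i := rfl

lemma wmap_append (u v : List (Fin N)) : S.wmap (u ++ v) = S.wmap u ∘ S.wmap v := by
  induction u with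
  | nil => rfl
  | cons i u ih => rw [List.cons_append, wmap_cons, ih]; rfl

lemma wmap_mem (w : List (Fin N)) {x : X} (hx : x ∈ Ω) : S.wmap w x ∈ Ω := by
  induction w with
  | nil => exact hx
  | cons i u ih =>
    exact S.mapsInto i (subset_closure (Set.mem_image_of_mem _ ih))

lemma wmap_diff_conf [Nontrivial X] (w : List (Fin N)) {x : X} (hx : x ∈ Ω) :
    DifferentiableAt ℝ (S.wmap w) x ∧
      ∀ v, ‖fderiv ℝ (S.wmap w) x v‖ = ‖fderiv ℝ (S.wmap w) x‖ * ‖v‖ := by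
  induction w with
  | nil =>
    refine ⟨differentiableAt_id, ?_⟩
    intro v
    rw [wmap_nil, fderiv_id, ContinuousLinearMap.norm_id, one_mul,
      ContinuousLinearMap.id_apply]
  | cons i u ih =>
    have hux : S.wmap u x ∈ Ω := S.wmap_mem u hx
    have hdiff : DifferentiableAt ℝ (S.wmap (i :: u)) x := by
      rw [wmap_cons]
      exact (S.diffAt i _ hux).comp x ih.1
    refine ⟨hdiff, ?_⟩
    have hcomp : fderiv ℝ (S.wmap (i :: u)) x
        = (fderiv ℝ (S.φ i) (S.wmap u x)).comp (fderiv ℝ (S.wmap u) x) := by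
      rw [wmap_cons]
      exact fderiv_comp x (S.diffAt i _ hux) ih.1
    intro v
    rw [hcomp, ContinuousLinearMap.comp_apply,
      opNorm_comp_eq _ _ (S.conformal i _ hux), S.conformal i _ hux, ih.2, mul_assoc]

lemma wmap_diff [Nontrivial X] (w : List (Fin N)) {x : X} (hx : x ∈ Ω) :
    DifferentiableAt ℝ (S.wmap w) x := (S.wmap_diff_conf w hx).1

lemma wmap_conf [Nontrivial X] (w : List (Fin N)) {x : X} (hx : x ∈ Ω) (v : X) :
    ‖fderiv ℝ (S.wmap w) x v‖ = ‖fderiv ℝ (S.wmap w) x‖ * ‖v‖ :=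
  (S.wmap_diff_conf w hx).2 v

lemma wmap_norm_append [Nontrivial X] (u v : List (Fin N)) {x : X} (hx : x ∈ Ω) :
    ‖fderiv ℝ (S.wmap (u ++ v)) x‖
      = ‖fderiv ℝ (S.wmap u) (S.wmap v x)‖ * ‖fderiv ℝ (S.wmap v) x‖ := by
  have hvx : S.wmap v x ∈ Ω := S.wmap_mem v hx
  have hcomp : fderiv ℝ (S.wmap (u ++ v)) x
      = (fderiv ℝ (S.wmap u) (S.wmap v x)).comp (fderiv ℝ (S.wmap v) x) := by
    rw [wmap_append]
    exact fderiv_comp x (S.wmap_diff u hvx) (S.wmap_diff v hx)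
  rw [hcomp, opNorm_comp_eq _ _ (fun w' => S.wmap_conf u hvx w')]

lemma wmap_norm_cons [Nontrivial X] (i : Fin N) (u : List (Fin N)) {x : X} (hx : x ∈ Ω) :
    ‖fderiv ℝ (S.wmap (i :: u)) x‖
      = ‖fderiv ℝ (S.φ i) (S.wmap u x)‖ * ‖fderiv ℝ (S.wmap u) x‖ := by
  have := S.wmap_norm_append [i] u hx
  rwa [List.singleton_append, wmap_single] at this

end CIFS
namespace CIFS
variable {X : Type*} [NormedAddCommGroup X] [NormedSpace ℝ X] {N : ℕ} {Ω : Set X}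
variable (S : CIFS X N Ω)

lemma finNonempty (S : CIFS X N Ω) : Nonempty (Fin N) :=
  Fin.pos_iff_nonempty.mp (lt_of_lt_of_le two_pos S.two_le)

lemma exists_s : ∃ s : ℝ, 0 ≤ s ∧ s < 1 ∧ ∀ i, ∀ x ∈ Ω, ‖fderiv ℝ (S.φ i) x‖ ≤ s := by
  choose t ht1 ht2 using S.contract
  have hN : (Finset.univ : Finset (Fin N)).Nonempty := by
    have := S.finNonempty; exact Finset.univ_nonempty
  obtain ⟨x₀, hx₀⟩ := S.nonempty
  obtain ⟨i₀⟩ := S.finNonempty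
  refine ⟨Finset.univ.sup' hN t, ?_, ?_, ?_⟩
  · exact le_trans (norm_nonneg _) (le_trans (ht2 i₀ x₀ hx₀)
      (Finset.le_sup' t (Finset.mem_univ i₀)))
  · exact (Finset.sup'_lt_iff hN).2 fun i _ => ht1 i
  · exact fun i x hx => le_trans (ht2 i x hx) (Finset.le_sup' t (Finset.mem_univ i))

lemma wmap_norm_le [Nontrivial X] {s : ℝ} (hs0 : 0 ≤ s)
    (hs : ∀ i, ∀ x ∈ Ω, ‖fderiv ℝ (S.φ i) x‖ ≤ s) (w : List (Fin N)) {x : X} (hx : x ∈ Ω) :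
    ‖fderiv ℝ (S.wmap w) x‖ ≤ s ^ w.length := by
  induction w with
  | nil =>
    rw [wmap_nil, fderiv_id, ContinuousLinearMap.norm_id]
    simp
  | cons i u ih =>
    rw [S.wmap_norm_cons i u hx, List.length_cons, pow_succ, mul_comm (s ^ u.length) s]
    exact mul_le_mul (hs i _ (S.wmap_mem u hx)) ih (norm_nonneg _) hs0

lemma le_dnorm [Nontrivial X] {s : ℝ} (hs0 : 0 ≤ s)
    (hs : ∀ i, ∀ x ∈ Ω, ‖fderiv ℝ (S.φ i) x‖ ≤ s) (w : List (Fin N)) {x : X} (hx : x ∈ Ω) :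
    ‖fderiv ℝ (S.wmap w) x‖ ≤ S.dnorm w := by
  refine le_csSup ⟨s ^ w.length, ?_⟩ ⟨x, hx, rfl⟩
  rintro t ⟨y, hy, rfl⟩
  exact S.wmap_norm_le hs0 hs w hy

lemma wmap_lipschitzOn [Nontrivial X] {C : ℝ} (w : List (Fin N))
    {K : Set X} (hKconv : Convex ℝ K) (hKΩ : K ⊆ Ω)
    (hC : ∀ x ∈ K, ‖fderiv ℝ (S.wmap w) x‖ ≤ C) :
    ∀ x ∈ K, ∀ y ∈ K, ‖S.wmap w x - S.wmap w y‖ ≤ C * ‖x - y‖ := by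
  intro x hx y hy
  exact Convex.norm_image_sub_le_of_norm_fderiv_le
    (fun z hz => S.wmap_diff w (hKΩ hz)) hC hKconv hy hx

end CIFS
namespace CIFS
variable {X : Type*} [NormedAddCommGroup X] [NormedSpace ℝ X] {N : ℕ} {Ω : Set X}
variable (S : CIFS X N Ω)

lemma fderiv_norm_continuousOn (i : Fin N) :
    ContinuousOn (fun x => ‖fderiv ℝ (S.φ i) x‖) Ω := by
  obtain ⟨α, c, hα, hc, hh⟩ := S.holder i
  rw [Metric.continuousOn_iff]
  intro b hb ε hε
  refine ⟨(ε / c) ^ (1 / α), Real.rpow_pos_of_pos (div_pos hε hc) _, fun a ha hab => ?_⟩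
  have h1 : dist (‖fderiv ℝ (S.φ i) a‖) (‖fderiv ℝ (S.φ i) b‖)
      ≤ ‖fderiv ℝ (S.φ i) a - fderiv ℝ (S.φ i) b‖ := by
    rw [Real.dist_eq]
    exact abs_norm_sub_norm_le _ _
  have h2 : ‖a - b‖ ^ α < ((ε / c) ^ (1 / α)) ^ α := by
    refine Real.rpow_lt_rpow (norm_nonneg _) ?_ hα
    rwa [dist_eq_norm] at hab
  have h3 : ((ε / c) ^ (1 / α)) ^ α = ε / c := by
    rw [← Real.rpow_mul (le_of_lt (div_pos hε hc)), one_div_mul_cancel hα.ne',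
      Real.rpow_one]
  calc dist (‖fderiv ℝ (S.φ i) a‖) (‖fderiv ℝ (S.φ i) b‖)
      ≤ c * ‖a - b‖ ^ α := le_trans h1 (hh a ha b hb)
    _ < c * (ε / c) := by
        rw [← h3]
        exact mul_lt_mul_of_pos_left h2 hc
    _ = ε := by field_simp

lemma exists_m {Ω₀ : Set X} (hcomp : IsCompact Ω₀) (hsub : Ω₀ ⊆ Ω) (hne : Ω₀.Nonempty) :
    ∃ m : ℝ, 0 < m ∧ ∀ i, ∀ x ∈ Ω₀, m ≤ ‖fderiv ℝ (S.φ i) x‖ := by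
  have H : ∀ i : Fin N, ∃ mi : ℝ, 0 < mi ∧ ∀ x ∈ Ω₀, mi ≤ ‖fderiv ℝ (S.φ i) x‖ := by
    intro i
    obtain ⟨xi, hxi, hmin⟩ := hcomp.exists_isMinOn hne
      ((S.fderiv_norm_continuousOn i).mono hsub)
    exact ⟨‖fderiv ℝ (S.φ i) xi‖, norm_pos_iff.2 (S.fderiv_ne i xi (hsub hxi)),
      fun x hx => hmin hx⟩
  choose mi h1 h2 using H
  have hN : (Finset.univ : Finset (Fin N)).Nonempty := by
    have := S.finNonempty; exact Finset.univ_nonempty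
  refine ⟨Finset.univ.inf' hN mi, ?_, ?_⟩
  · exact (Finset.lt_inf'_iff hN).2 fun i _ => h1 i
  · exact fun i x hx => le_trans (Finset.inf'_le mi (Finset.mem_univ i)) (h2 i x hx)

lemma distortion [Nontrivial X]
    {K Ω₀ : Set X} (hKconv : Convex ℝ K) (hKΩ : K ⊆ Ω) (hKΩ₀ : K ⊆ Ω₀)
    (hφΩ₀ : ∀ i, ∀ x ∈ Ω, S.φ i x ∈ Ω₀)
    {s α C m A ρ Δ : ℝ} (hs0 : 0 ≤ s) (hs1 : s < 1)
    (hs : ∀ i, ∀ x ∈ Ω, ‖fderiv ℝ (S.φ i) x‖ ≤ s)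
    (hα : 0 < α) (hC : 0 < C)
    (hH : ∀ i, ∀ x ∈ Ω, ∀ y ∈ Ω, ‖fderiv ℝ (S.φ i) x - fderiv ℝ (S.φ i) y‖ ≤ C * ‖x - y‖ ^ α)
    (hm : 0 < m) (hmle : ∀ i, ∀ x ∈ Ω₀, m ≤ ‖fderiv ℝ (S.φ i) x‖)
    (hΔ : ∀ x ∈ Ω, ∀ y ∈ Ω, ‖x - y‖ ≤ Δ) (hΔ0 : 0 ≤ Δ)
    (hρ : ρ = s ^ α) (hA : A = C * Δ ^ α / m) :
    ∀ w : List (Fin N), ∀ x ∈ K, ∀ y ∈ K,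
      ‖fderiv ℝ (S.wmap w) x‖ ≤ Real.exp (A / (1 - ρ)) * ‖fderiv ℝ (S.wmap w) y‖ := by
  have hρ0 : 0 ≤ ρ := hρ ▸ Real.rpow_nonneg hs0 α
  have hρ1 : ρ < 1 := hρ ▸ Real.rpow_lt_one hs0 hs1 hα
  have hA0 : 0 ≤ A := hA ▸ div_nonneg (mul_nonneg hC.le (Real.rpow_nonneg hΔ0 α)) hm.le
  have main : ∀ w : List (Fin N), ∀ x ∈ K, ∀ y ∈ K,
      ‖fderiv ℝ (S.wmap w) x‖
        ≤ Real.exp (A * ∑ k ∈ Finset.range w.length, ρ ^ k) * ‖fderiv ℝ (S.wmap w) y‖ := by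
    intro w
    induction w with
    | nil =>
      intro x hx y hy
      simp [wmap_nil, fderiv_id, ContinuousLinearMap.norm_id]
    | cons i u ih =>
      intro x hx y hy
      set n := u.length with hn
      have hxΩ : x ∈ Ω := hKΩ hx
      have hyΩ : y ∈ Ω := hKΩ hy
      have huxΩ : S.wmap u x ∈ Ω := S.wmap_mem u hxΩ
      have huyΩ : S.wmap u y ∈ Ω := S.wmap_mem u hyΩ
      -- Lipschitz bound for wmap u on K
      have hlip : ‖S.wmap u x - S.wmap u y‖ ≤ s ^ n * Δ := by
        have h1 : ‖S.wmap u x - S.wmap u y‖ ≤ s ^ n * ‖x - y‖ :=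
          S.wmap_lipschitzOn u hKconv hKΩ
            (fun z hz => S.wmap_norm_le hs0 hs u (hKΩ hz)) x hx y hy
        calc ‖S.wmap u x - S.wmap u y‖ ≤ s ^ n * ‖x - y‖ := h1
          _ ≤ s ^ n * Δ := mul_le_mul_of_nonneg_left (hΔ x hxΩ y hyΩ) (pow_nonneg hs0 n)
      have key1 : ‖fderiv ℝ (S.φ i) (S.wmap u x)‖
          ≤ ‖fderiv ℝ (S.φ i) (S.wmap u y)‖ + C * (s ^ n * Δ) ^ α := by
        have h1 : ‖fderiv ℝ (S.φ i) (S.wmap u x)‖ - ‖fderiv ℝ (S.φ i) (S.wmap u y)‖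
            ≤ ‖fderiv ℝ (S.φ i) (S.wmap u x) - fderiv ℝ (S.φ i) (S.wmap u y)‖ :=
          norm_sub_norm_le _ _
        have h2 := hH i _ huxΩ _ huyΩ
        have h3 : ‖S.wmap u x - S.wmap u y‖ ^ α ≤ (s ^ n * Δ) ^ α :=
          Real.rpow_le_rpow (norm_nonneg _) hlip hα.le
        nlinarith [mul_le_mul_of_nonneg_left h3 hC.le]
      have key2 : C * (s ^ n * Δ) ^ α = (A * m) * ρ ^ n := by
        have e1 : (s ^ n * Δ) ^ α = (s ^ n) ^ α * Δ ^ α :=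
          Real.mul_rpow (pow_nonneg hs0 n) hΔ0
        have e2 : (s ^ n : ℝ) ^ α = (s ^ α) ^ n := by
          rw [← Real.rpow_natCast s n, ← Real.rpow_mul hs0, mul_comm,
            Real.rpow_mul hs0, Real.rpow_natCast]
        have e3 : A * m = C * Δ ^ α := by
          rw [hA]; field_simp
        rw [e1, e2, ← hρ, e3]; ring
      have key3 : S.wmap u y ∈ Ω₀ := by
        cases u with
        | nil => exact hKΩ₀ hy
        | cons j u' => exact hφΩ₀ j _ (S.wmap_mem u' hyΩ)
      have hmb : m ≤ ‖fderiv ℝ (S.φ i) (S.wmap u y)‖ := hmle i _ key3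
      have key4 : ‖fderiv ℝ (S.φ i) (S.wmap u x)‖
          ≤ (1 + A * ρ ^ n) * ‖fderiv ℝ (S.φ i) (S.wmap u y)‖ := by
        have h4 : (A * m) * ρ ^ n ≤ (A * ρ ^ n) * ‖fderiv ℝ (S.φ i) (S.wmap u y)‖ := by
          have : A * ρ ^ n * m ≤ A * ρ ^ n * ‖fderiv ℝ (S.φ i) (S.wmap u y)‖ :=
            mul_le_mul_of_nonneg_left hmb (mul_nonneg hA0 (pow_nonneg hρ0 n))
          nlinarith
        nlinarith [key1, key2]
      have key5 : (1 + A * ρ ^ n) ≤ Real.exp (A * ρ ^ n) := by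
        have := Real.add_one_le_exp (A * ρ ^ n); linarith
      have hnorm : ‖fderiv ℝ (S.wmap (i :: u)) x‖
          = ‖fderiv ℝ (S.φ i) (S.wmap u x)‖ * ‖fderiv ℝ (S.wmap u) x‖ :=
        S.wmap_norm_cons i u hxΩ
      have hnorm' : ‖fderiv ℝ (S.wmap (i :: u)) y‖
          = ‖fderiv ℝ (S.φ i) (S.wmap u y)‖ * ‖fderiv ℝ (S.wmap u) y‖ :=
        S.wmap_norm_cons i u hyΩ
      have ihxy := ih x hx y hy
      rw [hnorm, hnorm']
      have step : ‖fderiv ℝ (S.φ i) (S.wmap u x)‖ * ‖fderiv ℝ (S.wmap u) x‖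
          ≤ ((1 + A * ρ ^ n) * ‖fderiv ℝ (S.φ i) (S.wmap u y)‖)
            * (Real.exp (A * ∑ k ∈ Finset.range n, ρ ^ k) * ‖fderiv ℝ (S.wmap u) y‖) := by
        refine mul_le_mul key4 ihxy (norm_nonneg _) ?_
        positivity
      refine le_trans step ?_
      have hexp : (1 + A * ρ ^ n) * Real.exp (A * ∑ k ∈ Finset.range n, ρ ^ k)
          ≤ Real.exp (A * ∑ k ∈ Finset.range (n + 1), ρ ^ k) := by
        rw [Finset.sum_range_succ, mul_add, Real.exp_add, mul_comm (Real.exp _)]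
        exact mul_le_mul_of_nonneg_right key5 (Real.exp_pos _).le
      calc ((1 + A * ρ ^ n) * ‖fderiv ℝ (S.φ i) (S.wmap u y)‖)
            * (Real.exp (A * ∑ k ∈ Finset.range n, ρ ^ k) * ‖fderiv ℝ (S.wmap u) y‖)
          = ((1 + A * ρ ^ n) * Real.exp (A * ∑ k ∈ Finset.range n, ρ ^ k))
            * (‖fderiv ℝ (S.φ i) (S.wmap u y)‖ * ‖fderiv ℝ (S.wmap u) y‖) := by ring
        _ ≤ Real.exp (A * ∑ k ∈ Finset.range (n + 1), ρ ^ k)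
            * (‖fderiv ℝ (S.φ i) (S.wmap u y)‖ * ‖fderiv ℝ (S.wmap u) y‖) := by
            refine mul_le_mul_of_nonneg_right hexp ?_
            positivity
        _ = Real.exp (A * ∑ k ∈ Finset.range (i :: u).length, ρ ^ k)
            * (‖fderiv ℝ (S.φ i) (S.wmap u y)‖ * ‖fderiv ℝ (S.wmap u) y‖) := by
            rw [List.length_cons]
  intro w x hx y hy
  refine le_trans (main w x hx y hy) (mul_le_mul_of_nonneg_right ?_ (norm_nonneg _))
  rw [Real.exp_le_exp]
  have hsum : ∑ k ∈ Finset.range w.length, ρ ^ k ≤ 1 / (1 - ρ) := by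
    have hgs := geom_sum_mul ρ w.length
    rw [le_div_iff₀ (by linarith : (0:ℝ) < 1 - ρ)]
    nlinarith [pow_nonneg hρ0 w.length]
  calc A * ∑ k ∈ Finset.range w.length, ρ ^ k ≤ A * (1 / (1 - ρ)) :=
        mul_le_mul_of_nonneg_left hsum hA0
    _ = A / (1 - ρ) := by ring

end CIFS
open scoped Pointwise
lemma closure_convexHull_subset {X : Type*} [NormedAddCommGroup X] [NormedSpace ℝ X]
    {F Ω : Set X} (hF : IsCompact F) (hΩ : IsOpen Ω) (hconv : Convex ℝ Ω) (hsub : F ⊆ Ω) :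
    closure (convexHull ℝ F) ⊆ Ω := by
  obtain ⟨δ, hδ, hth⟩ := hF.exists_thickening_subset_open hΩ hsub
  intro z hz
  have h1 : z ∈ Metric.thickening δ (convexHull ℝ F) :=
    Metric.closure_subset_thickening hδ _ hz
  rw [Metric.mem_thickening_iff] at h1
  obtain ⟨c, hc, hdist⟩ := h1
  have h2 : z ∈ convexHull ℝ F + ({z - c} : Set X) := by
    rw [Set.mem_add]
    exact ⟨c, hc, z - c, rfl, by abel⟩
  have h3 : convexHull ℝ F + ({z - c} : Set X) = convexHull ℝ (F + ({z - c} : Set X)) := by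
    rw [convexHull_add, convexHull_singleton]
  have h4 : F + ({z - c} : Set X) ⊆ Ω := by
    rintro w hw
    rw [Set.mem_add] at hw
    obtain ⟨a, ha, b, hb, rfl⟩ := hw
    rw [Set.mem_singleton_iff] at hb
    subst hb
    refine hth ?_
    rw [Metric.mem_thickening_iff]
    refine ⟨a, ha, ?_⟩
    rw [dist_eq_norm]
    simpa [dist_eq_norm] using hdist
  rw [h3] at h2
  exact convexHull_min h4 hconv h2

namespace CIFS
variable {X : Type*} [NormedAddCommGroup X] [NormedSpace ℝ X] {N : ℕ} {Ω : Set X}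
variable (S : CIFS X N Ω)

lemma exists_holder {Δ : ℝ} (hΔ : ∀ x ∈ Ω, ∀ y ∈ Ω, ‖x - y‖ ≤ Δ) :
    ∃ α C : ℝ, 0 < α ∧ 0 < C ∧ ∀ i, ∀ x ∈ Ω, ∀ y ∈ Ω,
      ‖fderiv ℝ (S.φ i) x - fderiv ℝ (S.φ i) y‖ ≤ C * ‖x - y‖ ^ α := by
  choose αi ci hαi hci hhi using S.holder
  have hN : (Finset.univ : Finset (Fin N)).Nonempty := by
    have := S.finNonempty; exact Finset.univ_nonempty
  set α : ℝ := Finset.univ.inf' hN αi with hαdef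
  have hα : 0 < α := (Finset.lt_inf'_iff hN).2 fun i _ => hαi i
  have hααi : ∀ i, α ≤ αi i := fun i => Finset.inf'_le αi (Finset.mem_univ i)
  have hM1 : (0:ℝ) < max 1 Δ := lt_of_lt_of_le one_pos (le_max_left _ _)
  set Ci : Fin N → ℝ := fun i => ci i * max 1 Δ ^ (αi i - α) with hCidef
  have hCi : ∀ i, 0 < Ci i := fun i => mul_pos (hci i) (Real.rpow_pos_of_pos hM1 _)
  set C : ℝ := Finset.univ.sup' hN Ci with hCdef
  obtain ⟨i₀⟩ := S.finNonempty
  have hC : 0 < C := lt_of_lt_of_le (hCi i₀) (Finset.le_sup' Ci (Finset.mem_univ i₀))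
  refine ⟨α, C, hα, hC, fun i x hx y hy => ?_⟩
  have hkey : ‖x - y‖ ^ (αi i) ≤ max 1 Δ ^ (αi i - α) * ‖x - y‖ ^ α := by
    rcases (norm_nonneg (x - y)).eq_or_lt with h0 | h0
    · rw [← h0, Real.zero_rpow (hαi i).ne']
      positivity
    · have e1 : ‖x - y‖ ^ (αi i) = ‖x - y‖ ^ (αi i - α) * ‖x - y‖ ^ α := by
        rw [← Real.rpow_add h0]; ring_nf
      rw [e1]
      refine mul_le_mul_of_nonneg_right ?_ (Real.rpow_nonneg (norm_nonneg _) _)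
      exact Real.rpow_le_rpow (norm_nonneg _)
        (le_trans (hΔ x hx y hy) (le_max_right _ _)) (sub_nonneg.2 (hααi i))
  calc ‖fderiv ℝ (S.φ i) x - fderiv ℝ (S.φ i) y‖
      ≤ ci i * ‖x - y‖ ^ (αi i) := hhi i x hx y hy
    _ ≤ ci i * (max 1 Δ ^ (αi i - α) * ‖x - y‖ ^ α) :=
        mul_le_mul_of_nonneg_left hkey (hci i).le
    _ = Ci i * ‖x - y‖ ^ α := by rw [hCidef]; ring
    _ ≤ C * ‖x - y‖ ^ α := by
        refine mul_le_mul_of_nonneg_right ?_ (Real.rpow_nonneg (norm_nonneg _) _)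
        exact Finset.le_sup' Ci (Finset.mem_univ i)

end CIFS
theorem ilc_implies_wsc {d N : ℕ} {Ω : Set (EuclideanSpace ℝ (Fin d))}
    (S : CIFS (EuclideanSpace ℝ (Fin d)) N Ω)
    (F : Set (EuclideanSpace ℝ (Fin d))) (hF : S.IsAttractor F)
    (h : S.ILC F) : S.WSC F := by
  classical
  obtain ⟨Fne, Fcomp, FΩ, Feq⟩ := hF
  obtain ⟨ε, εpos, hILC⟩ := h
  -- φ maps F into F
  have hφF : ∀ i, ∀ p ∈ F, S.φ i p ∈ F := by
    intro i p hp
    have hmem : S.φ i p ∈ ⋃ j, S.φ j '' F :=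
      Set.mem_iUnion.2 ⟨i, Set.mem_image_of_mem _ hp⟩
    rwa [← Feq] at hmem
  -- degenerate case : diam F = 0
  by_cases hdd : Metric.diam F = 0
  · refine ⟨0, fun x hx r hr => ?_⟩
    have hPhiempty : S.Phi F x r = ∅ := by
      rw [Set.eq_empty_iff_forall_notMem]
      rintro g ⟨w, hw, _, hlt, _, _⟩
      have hsub : (S.wmap w.dropLast '' F).Subsingleton := by
        rintro p ⟨p0, hp0, rfl⟩ q ⟨q0, hq0, rfl⟩
        have hpq : p0 = q0 := by
          have hd := Metric.dist_le_diam_of_mem Fcomp.isBounded hp0 hq0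
          rw [hdd] at hd
          exact dist_le_zero.1 hd
        rw [hpq]
      have h0 : Metric.diam (S.wmap w.dropLast '' F) = 0 := Metric.diam_subsingleton hsub
      rw [h0] at hlt; linarith
    rw [hPhiempty]
    exact ⟨Set.finite_empty, by simp⟩
  have hdF : 0 < Metric.diam F := lt_of_le_of_ne Metric.diam_nonneg (Ne.symm hdd)
  obtain ⟨a, ha, b, hb, hab⟩ : ∃ a ∈ F, ∃ b ∈ F, a ≠ b := by
    by_contra hcon
    push_neg at hcon
    exact hdd (Metric.diam_subsingleton fun p hp q hq => hcon p hp q hq)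
  haveI : Nontrivial (EuclideanSpace ℝ (Fin d)) := ⟨⟨a, b, hab⟩⟩
  haveI : Nonempty (↥F) := ⟨⟨a, ha⟩⟩
  -- constants
  obtain ⟨s, hs0, hs1, hs⟩ := S.exists_s
  have hΔbound : ∀ p ∈ Ω, ∀ q ∈ Ω, ‖p - q‖ ≤ Metric.diam Ω := fun p hp q hq => by
    rw [← dist_eq_norm]; exact Metric.dist_le_diam_of_mem S.isBounded hp hq
  have hΔ0 : (0:ℝ) ≤ Metric.diam Ω := Metric.diam_nonneg
  obtain ⟨α, C, hα, hC, hH⟩ := S.exists_holder hΔbound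
  -- the compact convex set K and the compact set Ω₀
  set K := closure (convexHull ℝ F) with hKdef
  have hKΩ : K ⊆ Ω := closure_convexHull_subset Fcomp S.isOpen S.convex FΩ
  have hFK : F ⊆ K := (subset_convexHull ℝ F).trans subset_closure
  have hKconv : Convex ℝ K := (convex_convexHull ℝ F).closure
  set Ω₀ := K ∪ ⋃ i, closure (S.φ i '' Ω) with hΩ₀def
  have hΩ₀Ω : Ω₀ ⊆ Ω := Set.union_subset hKΩ (Set.iUnion_subset fun i => S.mapsInto i)
  have hΩ₀comp : IsCompact Ω₀ := by
    refine IsCompact.union ?_ ?_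
    · exact isCompact_of_isClosed_isBounded isClosed_closure
        ((isBounded_convexHull.2 Fcomp.isBounded).closure)
    · exact isCompact_iUnion fun i => isCompact_of_isClosed_isBounded isClosed_closure
        (S.isBounded.subset (S.mapsInto i))
  have hφΩ₀ : ∀ i, ∀ p ∈ Ω, S.φ i p ∈ Ω₀ := fun i p hp =>
    Set.mem_union_right _ (Set.mem_iUnion.2 ⟨i, subset_closure (Set.mem_image_of_mem _ hp)⟩)
  have hKΩ₀ : K ⊆ Ω₀ := Set.subset_union_left
  obtain ⟨m, hm, hmle⟩ := S.exists_m hΩ₀comp hΩ₀Ω ⟨a, hKΩ₀ (hFK ha)⟩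
  set ρ := s ^ α with hρdef
  set A := C * Metric.diam Ω ^ α / m with hAdef
  set D := Real.exp (A / (1 - ρ)) with hDdef
  have hρ0 : 0 ≤ ρ := Real.rpow_nonneg hs0 α
  have hρ1 : ρ < 1 := Real.rpow_lt_one hs0 hs1 hα
  have hA0 : 0 ≤ A := div_nonneg (mul_nonneg hC.le (Real.rpow_nonneg hΔ0 α)) hm.le
  have hD1 : 1 ≤ D := Real.one_le_exp (div_nonneg hA0 (by linarith))
  have hD0 : 0 < D := lt_of_lt_of_le one_pos hD1
  have hdist := S.distortion hKconv hKΩ hKΩ₀ hφΩ₀ hs0 hs1 hs hα hC hH hm hmle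
    hΔbound hΔ0 hρdef hAdef
  have hdle : ∀ w : List (Fin N), ∀ p ∈ Ω, ‖fderiv ℝ (S.wmap w) p‖ ≤ S.dnorm w :=
    fun w p hp => S.le_dnorm hs0 hs w hp
  have hd0 : ∀ w : List (Fin N), 0 ≤ S.dnorm w :=
    fun w => le_trans (norm_nonneg _) (hdle w a (FΩ ha))
  -- Lipschitz of wmap on Ω with constant dnorm
  have hlipd : ∀ w : List (Fin N), ∀ p ∈ Ω, ∀ q ∈ Ω,
      dist (S.wmap w p) (S.wmap w q) ≤ S.dnorm w * ‖p - q‖ := by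
    intro w p hp q hq
    rw [dist_eq_norm]
    exact S.wmap_lipschitzOn w S.convex subset_rfl (fun z hz => hdle w z hz) p hp q hq
  set δ₀ := m / (D * Metric.diam F) with hδ₀def
  have hδ₀ : 0 < δ₀ := div_pos hm (mul_pos hD0 hdF)
  -- main geometric claim: words appearing in `Phi` have dnorm ≥ δ₀ r
  have claimA : ∀ r : ℝ, 0 < r → ∀ w : List (Fin N), w ≠ [] →
      r < Metric.diam (S.wmap w.dropLast '' F) → δ₀ * r ≤ S.dnorm w := by
    intro r hr w hw hlt
    set u := w.dropLast with hudef
    set i := w.getLast hw with hidef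
    have hui : u ++ [i] = w := List.dropLast_append_getLast hw
    have hφa : S.φ i a ∈ F := hφF i a ha
    have hφaK : S.φ i a ∈ K := hFK hφa
    set B := ‖fderiv ℝ (S.wmap u) (S.φ i a)‖ with hBdef
    have hB0 : 0 ≤ B := norm_nonneg _
    have hLipK : ∀ p ∈ K, ‖fderiv ℝ (S.wmap u) p‖ ≤ D * B := fun p hp =>
      hdist u p hp _ hφaK
    have hdiam : Metric.diam (S.wmap u '' F) ≤ D * B * Metric.diam F := by
      refine Metric.diam_le_of_forall_dist_le (by positivity) ?_
      rintro p ⟨p0, hp0, rfl⟩ q ⟨q0, hq0, rfl⟩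
      rw [dist_eq_norm]
      have h1 : ‖S.wmap u p0 - S.wmap u q0‖ ≤ D * B * ‖p0 - q0‖ :=
        S.wmap_lipschitzOn u hKconv hKΩ hLipK p0 (hFK hp0) q0 (hFK hq0)
      have h2 : ‖p0 - q0‖ ≤ Metric.diam F := by
        rw [← dist_eq_norm]; exact Metric.dist_le_diam_of_mem Fcomp.isBounded hp0 hq0
      calc ‖S.wmap u p0 - S.wmap u q0‖ ≤ D * B * ‖p0 - q0‖ := h1
        _ ≤ D * B * Metric.diam F := mul_le_mul_of_nonneg_left h2 (by positivity)
    have hrB : r < D * B * Metric.diam F := lt_of_lt_of_le hlt hdiam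
    have hBge : r / (D * Metric.diam F) ≤ B := by
      rw [div_le_iff₀ (by positivity)]
      nlinarith
    have hnorm : ‖fderiv ℝ (S.wmap w) a‖ = B * ‖fderiv ℝ (S.φ i) a‖ := by
      rw [← hui, S.wmap_norm_append u [i] (FΩ ha), S.wmap_single]
    have hmi : m ≤ ‖fderiv ℝ (S.φ i) a‖ := hmle i a (hKΩ₀ (hFK ha))
    have hdiv0 : 0 ≤ r / (D * Metric.diam F) := by positivity
    calc δ₀ * r = m * (r / (D * Metric.diam F)) := by
          rw [hδ₀def]; ring
      _ ≤ ‖fderiv ℝ (S.φ i) a‖ * B := mul_le_mul hmi hBge hdiv0 (le_trans hm.le hmi)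
      _ = ‖fderiv ℝ (S.wmap w) a‖ := by rw [hnorm]; ring
      _ ≤ S.dnorm w := hdle w a (FΩ ha)
  -- symmetry of sep
  have hsep_symm : ∀ w v : List (Fin N), S.sep F w v = S.sep F v w := by
    intro w v
    simp only [CIFS.sep, dist_comm]
  -- finite η-net of F
  obtain ⟨P0, hP0F, hP0fin, hP0cov⟩ := Fcomp.finite_cover_balls
    (show (0:ℝ) < ε / 4 by positivity)
  -- separation constant
  set δ := ε * δ₀ / 4 with hδdef
  have hδpos : 0 < δ := by positivity
  -- finite (δ/8)-cover of the unit ball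
  obtain ⟨Q0, hQ0sub, hQ0fin, hQ0cov⟩ :=
    (isCompact_closedBall (0 : EuclideanSpace ℝ (Fin d)) 1).finite_cover_balls
      (show (0:ℝ) < δ / 8 by positivity)
  have hQ0ne : Q0.Nonempty := by
    by_contra hemp
    rw [Set.not_nonempty_iff_eq_empty] at hemp
    have h0 : (0 : EuclideanSpace ℝ (Fin d)) ∈ Metric.closedBall (0:EuclideanSpace ℝ (Fin d)) 1 :=
      Metric.mem_closedBall_self one_pos.le
    have := hQ0cov h0
    simp [hemp] at this
  set Pf := hP0fin.toFinset with hPfdef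
  set Qf := hQ0fin.toFinset with hQfdef
  obtain ⟨qd, hqd⟩ := hQ0ne
  have hqdQf : qd ∈ Qf := hQ0fin.mem_toFinset.2 hqd
  refine ⟨Nat.card (↥Pf → ↥Qf), fun x hx r hr => ?_⟩
  -- values of maps in Phi lie in B(x, 2r)
  have hval : ∀ g ∈ S.Phi F x r, ∀ p : ↥F, g p ∈ Metric.closedBall x (2 * r) := by
    rintro g ⟨w, hw, hdiamw, hlt, ⟨q0, hq0mem, hq0ball⟩, rfl⟩ p
    have himg : S.wmap w '' F ⊆ Ω := by
      rintro y ⟨y0, hy0, rfl⟩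
      exact S.wmap_mem w (FΩ hy0)
    have hbd : Bornology.IsBounded (S.wmap w '' F) := S.isBounded.subset himg
    have h1 : dist (S.wmap w (p : EuclideanSpace ℝ (Fin d))) q0
        ≤ Metric.diam (S.wmap w '' F) :=
      Metric.dist_le_diam_of_mem hbd (Set.mem_image_of_mem _ p.2) hq0mem
    have h2 : dist q0 x ≤ r := Metric.mem_closedBall.1 hq0ball
    rw [Metric.mem_closedBall]
    calc dist (Set.restrict F (S.wmap w) p) x
        ≤ dist (S.wmap w (p : EuclideanSpace ℝ (Fin d))) q0 + dist q0 x := dist_triangle _ _ _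
      _ ≤ Metric.diam (S.wmap w '' F) + r := add_le_add h1 h2
      _ ≤ 2 * r := by linarith
  -- fine cover of B(x, 2r) at scale δ r / 4
  have hr2 : (0:ℝ) < 2 * r := by linarith
  have hcov2 : ∀ p ∈ Metric.closedBall x (2 * r), ∃ q ∈ Qf,
      dist p (x + (2 * r) • q) < δ * r / 4 := by
    intro p hp
    have h1 : (2 * r)⁻¹ • (p - x) ∈ Metric.closedBall (0 : EuclideanSpace ℝ (Fin d)) 1 := by
      rw [Metric.mem_closedBall, dist_zero_right, norm_smul, norm_inv, Real.norm_eq_abs,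
        abs_of_pos hr2]
      have hpx : ‖p - x‖ ≤ 2 * r := by
        rw [← dist_eq_norm]; exact Metric.mem_closedBall.1 hp
      calc (2 * r)⁻¹ * ‖p - x‖ ≤ (2 * r)⁻¹ * (2 * r) :=
            mul_le_mul_of_nonneg_left hpx (by positivity)
        _ = 1 := by field_simp
    have h2 := hQ0cov h1
    rw [Set.mem_iUnion₂] at h2
    obtain ⟨q, hqQ, hqball⟩ := h2
    refine ⟨q, hQ0fin.mem_toFinset.2 hqQ, ?_⟩
    have h3 : p - (x + (2 * r) • q) = (2 * r) • ((2 * r)⁻¹ • (p - x) - q) := by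
      rw [smul_sub, smul_inv_smul₀ hr2.ne']
      abel
    rw [dist_eq_norm, h3, norm_smul, Real.norm_eq_abs, abs_of_pos hr2]
    have h4 : ‖(2 * r)⁻¹ • (p - x) - q‖ < δ / 8 := by
      rw [← dist_eq_norm]; exact Metric.mem_ball.1 hqball
    calc (2 * r) * ‖(2 * r)⁻¹ • (p - x) - q‖ < (2 * r) * (δ / 8) :=
          mul_lt_mul_of_pos_left h4 hr2
      _ = δ * r / 4 := by ring
  -- separation of distinct maps in Phi at a net point
  have hsepclaim : ∀ g ∈ S.Phi F x r, ∀ g' ∈ S.Phi F x r, g ≠ g' →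
      ∃ p : ↥F, (p : EuclideanSpace ℝ (Fin d)) ∈ P0 ∧ δ * r ≤ dist (g p) (g' p) := by
    rintro g ⟨w, hw, hdiamw, hltw, hint, rfl⟩ g' ⟨v, hv, hdiamv, hltv, hint', rfl⟩ hne
    have h1 : ε * S.dnorm w ≤ S.sep F w v := hILC w v hne
    have h2 : ε * S.dnorm v ≤ S.sep F w v := by
      rw [hsep_symm]; exact hILC v w (Ne.symm hne)
    have hdw : δ₀ * r ≤ S.dnorm w := claimA r hr w hw hltw
    have hdv : δ₀ * r ≤ S.dnorm v := claimA r hr v hv hltv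
    set σ := S.sep F w v with hσdef
    have hσpos : 0 < σ :=
      lt_of_lt_of_le (mul_pos εpos (lt_of_lt_of_le (mul_pos hδ₀ hr) hdw)) h1
    have h34 : (3 / 4 : ℝ) * σ < σ := by linarith
    have hσisup : σ = ⨆ y : ↥F, dist (S.wmap w (y : EuclideanSpace ℝ (Fin d)))
        (S.wmap v (y : EuclideanSpace ℝ (Fin d))) := rfl
    rw [hσisup] at h34
    obtain ⟨x0, hx0⟩ := exists_lt_of_lt_ciSup h34
    have hx0F : (x0 : EuclideanSpace ℝ (Fin d)) ∈ F := x0.2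
    have hcovx0 := hP0cov hx0F
    rw [Set.mem_iUnion₂] at hcovx0
    obtain ⟨p, hpP0, hpball⟩ := hcovx0
    have hpF : p ∈ F := hP0F hpP0
    have hx0p : ‖(x0 : EuclideanSpace ℝ (Fin d)) - p‖ ≤ ε / 4 := by
      rw [← dist_eq_norm]
      exact (Metric.mem_ball.1 hpball).le
    have hlw : dist (S.wmap w (x0 : EuclideanSpace ℝ (Fin d))) (S.wmap w p)
        ≤ S.dnorm w * (ε / 4) := by
      refine le_trans (hlipd w _ (FΩ hx0F) p (FΩ hpF)) ?_
      exact mul_le_mul_of_nonneg_left hx0p (hd0 w)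
    have hlv : dist (S.wmap v (x0 : EuclideanSpace ℝ (Fin d))) (S.wmap v p)
        ≤ S.dnorm v * (ε / 4) := by
      refine le_trans (hlipd v _ (FΩ hx0F) p (FΩ hpF)) ?_
      exact mul_le_mul_of_nonneg_left hx0p (hd0 v)
    have hdwσ : S.dnorm w * ε ≤ σ := by rw [mul_comm]; exact h1
    have hdvσ : S.dnorm v * ε ≤ σ := by rw [mul_comm]; exact h2
    refine ⟨⟨p, hpF⟩, hpP0, ?_⟩
    have htri : dist (S.wmap w (x0 : EuclideanSpace ℝ (Fin d)))
          (S.wmap v (x0 : EuclideanSpace ℝ (Fin d)))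
        ≤ dist (S.wmap w (x0 : EuclideanSpace ℝ (Fin d))) (S.wmap w p)
          + dist (S.wmap w p) (S.wmap v p)
          + dist (S.wmap v p) (S.wmap v (x0 : EuclideanSpace ℝ (Fin d))) :=
      dist_triangle4 _ _ _ _
    have hvsym : dist (S.wmap v p) (S.wmap v (x0 : EuclideanSpace ℝ (Fin d)))
        = dist (S.wmap v (x0 : EuclideanSpace ℝ (Fin d))) (S.wmap v p) := dist_comm _ _
    rw [hvsym] at htri
    have hgoal : δ * r ≤ dist (S.wmap w p) (S.wmap v p) := by
      have e1 : S.dnorm w * (ε / 4) ≤ σ / 4 := by linarith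
      have e2 : S.dnorm v * (ε / 4) ≤ σ / 4 := by linarith
      have e3 : δ * r ≤ σ / 4 := by
        have : ε * (δ₀ * r) ≤ σ := le_trans (mul_le_mul_of_nonneg_left hdw εpos.le) h1
        rw [hδdef]; linarith
      linarith [hx0]
    exact hgoal
  -- the coding map
  set T : (↥F → EuclideanSpace ℝ (Fin d)) → (↥Pf → ↥Qf) := fun g p =>
    if hex : ∃ q ∈ Qf, dist (g ⟨(p : EuclideanSpace ℝ (Fin d)),
        hP0F (hP0fin.mem_toFinset.1 p.2)⟩) (x + (2 * r) • q) < δ * r / 4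
    then ⟨hex.choose, hex.choose_spec.1⟩ else ⟨qd, hqdQf⟩ with hTdef
  have hTprop : ∀ g ∈ S.Phi F x r, ∀ p : ↥Pf,
      dist (g ⟨(p : EuclideanSpace ℝ (Fin d)), hP0F (hP0fin.mem_toFinset.1 p.2)⟩)
        (x + (2 * r) • ((T g p : EuclideanSpace ℝ (Fin d)))) < δ * r / 4 := by
    intro g hg p
    have hex : ∃ q ∈ Qf, dist (g ⟨(p : EuclideanSpace ℝ (Fin d)),
        hP0F (hP0fin.mem_toFinset.1 p.2)⟩) (x + (2 * r) • q) < δ * r / 4 :=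
      hcov2 _ (hval g hg _)
    simp only [hTdef, dif_pos hex]
    exact hex.choose_spec.2
  have hTinj : Set.InjOn T (S.Phi F x r) := by
    intro g hg g' hg' hT
    by_contra hne
    obtain ⟨p, hpP0, hsep⟩ := hsepclaim g hg g' hg' hne
    have hpPf : (p : EuclideanSpace ℝ (Fin d)) ∈ Pf := hP0fin.mem_toFinset.2 hpP0
    set pp : ↥Pf := ⟨(p : EuclideanSpace ℝ (Fin d)), hpPf⟩ with hppdef
    have h1 := hTprop g hg pp
    have h2 := hTprop g' hg' pp
    rw [hT] at h1
    have hpeq : (⟨(pp : EuclideanSpace ℝ (Fin d)),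
        hP0F (hP0fin.mem_toFinset.1 pp.2)⟩ : ↥F) = p := by
      apply Subtype.ext; rfl
    rw [hpeq] at h1 h2
    have htri : dist (g p) (g' p)
        ≤ dist (g p) (x + (2 * r) • ((T g' pp : EuclideanSpace ℝ (Fin d))))
          + dist (x + (2 * r) • ((T g' pp : EuclideanSpace ℝ (Fin d)))) (g' p) :=
      dist_triangle _ _ _
    rw [dist_comm (x + (2 * r) • ((T g' pp : EuclideanSpace ℝ (Fin d)))) (g' p)] at htri
    have : dist (g p) (g' p) < δ * r / 2 := by linarith
    have hδr : 0 < δ * r := by positivity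
    linarith
  have hfin : (S.Phi F x r).Finite := by
    have himg : (T '' S.Phi F x r).Finite := Set.toFinite _
    exact Set.Finite.of_finite_image himg hTinj
  refine ⟨hfin, ?_⟩
  have hle := Set.ncard_le_ncard_of_injOn T
    (fun g _ => Set.mem_univ (T g)) hTinj (Set.finite_univ)
  rwa [Set.ncard_univ] at hle
end
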